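/- arXiv:2406.02068 — 3 statements merged into one kernel-verified Lean document; each statement's English description precedes it below -/
import Mathlib

section
/- Let σ be a reflection on V as above and σ∨ its dual reflection on V*. Suppose μ, ν are finite measures on compact subsets of V and V* respectively, invariant under σ and σ∨. If γ is a (σ, σ∨)-invariant optimal transport plan from μ to ν for the cost c(m,n) = -⟨m,n⟩, then every point (m,n) in the support of γ satisfies ⟨m, α∨⟩·⟨α, n⟩ ≥ 0. -/
open MeasureTheory
open scoped ENNReal

/-- Identify ℝ^d with its dual via the standard pairing. Let σ, σ∨ be
dual reflections, μ, ν finite measures supported on compact sets, invariant under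
σ and σ∨ respectively, and γ a (σ,σ∨)-invariant optimal transport plan from μ to ν
for the cost c(m,n) = −⟨m,n⟩. Then any point (m,n) of the support of γ satisfies
⟨m,α∨⟩·⟨α,n⟩ ≥ 0. -/
theorem stmt1 (d : ℕ)
    (p : (Fin d → ℝ) → (Fin d → ℝ) → ℝ) (hp : ∀ m n, p m n = ∑ i, m i * n i)
    (α αv : Fin d → ℝ) (hα : p α αv = 2)
    (σ σv : (Fin d → ℝ) → (Fin d → ℝ))
    (hσ : ∀ m, σ m = m - p m αv • α)
    (hσv : ∀ n, σv n = n - p α n • αv)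
    (μ ν : Measure (Fin d → ℝ)) [IsFiniteMeasure μ] [IsFiniteMeasure ν]
    (hμc : ∃ K, IsCompact K ∧ μ Kᶜ = 0) (hνc : ∃ K, IsCompact K ∧ ν Kᶜ = 0)
    (hμinv : Measure.map σ μ = μ) (hνinv : Measure.map σv ν = ν)
    (c : (Fin d → ℝ) → (Fin d → ℝ) → ℝ) (hc : ∀ m n, c m n = - p m n)
    (γ : Measure ((Fin d → ℝ) × (Fin d → ℝ)))
    (hγ1 : γ.fst = μ) (hγ2 : γ.snd = ν)
    (hγinv : Measure.map (Prod.map σ σv) γ = γ)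
    (hopt : ∀ γ' : Measure ((Fin d → ℝ) × (Fin d → ℝ)),
      γ'.fst = μ → γ'.snd = ν →
      ∫ q, c q.1 q.2 ∂γ ≤ ∫ q, c q.1 q.2 ∂γ')
    (m n : Fin d → ℝ)
    (hsupp : ∀ U : Set ((Fin d → ℝ) × (Fin d → ℝ)), IsOpen U → (m, n) ∈ U → 0 < γ U) :
    0 ≤ p m αv * p α n := by
  by_contra hcon
  push_neg at hcon
  -- bilinearity of p
  have hpl : ∀ x y z : Fin d → ℝ, p (x - y) z = p x z - p y z := by
    intro x y z; simp [hp, sub_mul, Finset.sum_sub_distrib]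
  have hpr : ∀ x y z : Fin d → ℝ, p x (y - z) = p x y - p x z := by
    intro x y z; simp [hp, mul_sub, Finset.sum_sub_distrib]
  have hpsl : ∀ (r : ℝ) (x z : Fin d → ℝ), p (r • x) z = r * p x z := by
    intro r x z; simp [hp, Finset.mul_sum, mul_assoc]
  have hpsr : ∀ (r : ℝ) (x z : Fin d → ℝ), p x (r • z) = r * p x z := by
    intro r x z
    simp only [hp, Pi.smul_apply, smul_eq_mul, Finset.mul_sum]
    exact Finset.sum_congr rfl fun i _ => by ring
  -- reflection identities
  have hσαv : ∀ x, p (σ x) αv = - p x αv := by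
    intro x; rw [hσ, hpl, hpsl, hα]; ring
  have hασv : ∀ y, p α (σv y) = - p α y := by
    intro y; rw [hσv, hpr, hpsr, hα]; ring
  have hpxσv : ∀ x y, p x (σv y) = p x y - p α y * p x αv := by
    intro x y; rw [hσv, hpr, hpsr]
  have hpσxy : ∀ x y, p (σ x) y = p x y - p x αv * p α y := by
    intro x y; rw [hσ, hpl, hpsl]
  have hσσ : ∀ x, σ (σ x) = x := by
    intro x; rw [hσ (σ x), hσαv, hσ x]; module
  have hσvσv : ∀ y, σv (σv y) = y := by
    intro y; rw [hσv (σv y), hασv, hσv y]; module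
  -- continuity
  have hcont1 : Continuous fun x : Fin d → ℝ => p x αv := by
    simp only [hp]
    exact continuous_finset_sum _ fun i _ => (continuous_apply i).mul continuous_const
  have hcont2 : Continuous fun y : Fin d → ℝ => p α y := by
    simp only [hp]
    exact continuous_finset_sum _ fun i _ => continuous_const.mul (continuous_apply i)
  have hσcont : Continuous σ := by
    have h : σ = fun x => x - p x αv • α := funext hσ
    rw [h]; exact continuous_id.sub (hcont1.smul continuous_const)
  have hσvcont : Continuous σv := by
    have h : σv = fun y => y - p α y • αv := funext hσv
    rw [h]; exact continuous_id.sub (hcont2.smul continuous_const)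
  set cf : (Fin d → ℝ) × (Fin d → ℝ) → ℝ := fun q => c q.1 q.2 with hcf
  have hccont : Continuous cf := by
    have h : cf = fun q : (Fin d → ℝ) × (Fin d → ℝ) => -∑ i, q.1 i * q.2 i := by
      funext q; rw [hcf]; simp only [hc, hp]
    rw [h]
    exact (continuous_finset_sum _ fun i _ =>
      ((continuous_apply i).comp continuous_fst).mul
        ((continuous_apply i).comp continuous_snd)).neg
  set F : (Fin d → ℝ) × (Fin d → ℝ) → ℝ := fun q => p q.1 αv * p α q.2 with hFdef
  have hFcont : Continuous F :=
    (hcont1.comp continuous_fst).mul (hcont2.comp continuous_snd)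
  -- the involution T
  set T : (Fin d → ℝ) × (Fin d → ℝ) → (Fin d → ℝ) × (Fin d → ℝ) := Prod.map σ σv with hTdef
  have hTcont : Continuous T := hσcont.prodMap hσvcont
  have hTmeas : Measurable T := hTcont.measurable
  have hTT : ∀ q, T (T q) = q := by
    intro q
    show (σ (σ q.1), σv (σv q.2)) = q
    rw [hσσ, hσvσv]
  have hFT : ∀ q, F (T q) = F q := by
    intro q
    show p (σ q.1) αv * p α (σv q.2) = p q.1 αv * p α q.2
    rw [hσαv, hασv]; ring
  -- T (m, n) ≠ (m, n)
  have hane : p m αv ≠ 0 := fun h => by rw [h, zero_mul] at hcon; exact lt_irrefl 0 hcon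
  have hαne : α ≠ 0 := by
    intro h; rw [h] at hα; simp [hp] at hα
  have hTz : T (m, n) ≠ (m, n) := by
    intro h
    have h1 : σ m = m := congrArg Prod.fst h
    rw [hσ] at h1
    have : p m αv • α = 0 := by
      have := sub_eq_iff_eq_add.mp h1
      linear_combination (norm := module) -this
    rcases smul_eq_zero.mp this with h' | h'
    · exact hane h'
    · exact hαne h'
  -- separate (m,n) from T (m,n)
  obtain ⟨V1, V2, hV1o, hV2o, hz1, hz2, hVd⟩ := t2_separation (Ne.symm hTz)
  set A : Set ((Fin d → ℝ) × (Fin d → ℝ)) :=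
    (F ⁻¹' Set.Iio 0) ∩ (V1 ∩ T ⁻¹' V2) with hAdef
  have hAo : IsOpen A :=
    ((isOpen_Iio.preimage hFcont)).inter (hV1o.inter (hV2o.preimage hTcont))
  have hzA : (m, n) ∈ A := by
    refine ⟨?_, hz1, ?_⟩
    · simpa [hFdef] using hcon
    · show T (m, n) ∈ V2; exact hz2
  have hAdisj : A ∩ T ⁻¹' A = ∅ := by
    ext q
    simp only [Set.mem_inter_iff, Set.mem_preimage, Set.mem_empty_iff_false, iff_false]
    rintro ⟨⟨-, -, hTqV2⟩, -, hTqV1, -⟩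
    exact hVd.ne_of_mem hTqV1 hTqV2 rfl
  set B : Set ((Fin d → ℝ) × (Fin d → ℝ)) := A ∪ T ⁻¹' A with hBdef
  have hBo : IsOpen B := hAo.union (hAo.preimage hTcont)
  have hBmeas : MeasurableSet B := hBo.measurableSet
  have hTB : T ⁻¹' B = B := by
    rw [hBdef, Set.preimage_union]
    have : T ⁻¹' (T ⁻¹' A) = A := by
      ext q; simp [hTT q]
    rw [this, Set.union_comm]
  have hFB : ∀ q ∈ B, F q < 0 := by
    rintro q (⟨hq, -⟩ | hq)
    · exact hq
    · have : F (T q) < 0 := hq.1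
      rwa [hFT] at this
  -- γ is finite
  haveI hγfin : IsFiniteMeasure γ := by
    constructor
    rw [← Measure.fst_univ, hγ1]
    exact measure_lt_top μ _
  -- γ concentrated on compact set
  obtain ⟨K, hK, hμK⟩ := hμc
  obtain ⟨L, hL, hνL⟩ := hνc
  set S : Set ((Fin d → ℝ) × (Fin d → ℝ)) := K ×ˢ L with hSdef
  have hScomp : IsCompact S := hK.prod hL
  have hγSc : γ Sᶜ = 0 := by
    have hsub : Sᶜ ⊆ Prod.fst ⁻¹' Kᶜ ∪ Prod.snd ⁻¹' Lᶜ := by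
      intro q hq
      rw [hSdef] at hq
      simp only [Set.mem_compl_iff, Set.mem_prod, not_and_or] at hq
      rcases hq with h | h
      · exact Or.inl h
      · exact Or.inr h
    refine measure_mono_null hsub (measure_union_null ?_ ?_)
    · have := Measure.fst_apply (ρ := γ) hK.isClosed.measurableSet.compl
      rw [hγ1] at this; rw [← this, hμK]
    · have := Measure.snd_apply (ρ := γ) hL.isClosed.measurableSet.compl
      rw [hγ2] at this; rw [← this, hνL]
  have hγS : γ.restrict S = γ := by
    apply Measure.restrict_eq_self_of_ae_mem
    rw [Filter.eventually_iff, mem_ae_iff]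
    simpa using hγSc
  -- integrability of continuous functions against submeasures of γ
  have hint : ∀ g : (Fin d → ℝ) × (Fin d → ℝ) → ℝ, Continuous g →
      ∀ ρ : Measure ((Fin d → ℝ) × (Fin d → ℝ)), ρ ≤ γ → Integrable g ρ := by
    intro g hg ρ hρ
    refine Integrable.mono_measure ?_ hρ
    rw [← hγS]
    exact hg.continuousOn.integrableOn_compact hScomp
  -- the modified plan
  set β : Measure ((Fin d → ℝ) × (Fin d → ℝ)) := γ.restrict B with hβdef
  have hβle : β ≤ γ := Measure.restrict_le_self
  have hβT : Measure.map T β = β := by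
    rw [hβdef]
    conv_lhs => rw [← hTB]
    rw [← Measure.restrict_map hTmeas hBmeas, hγinv]
  set g1 : (Fin d → ℝ) × (Fin d → ℝ) → (Fin d → ℝ) × (Fin d → ℝ) := Prod.map id σv with hg1def
  set g2 : (Fin d → ℝ) × (Fin d → ℝ) → (Fin d → ℝ) × (Fin d → ℝ) := Prod.map σ id with hg2def
  have hg1cont : Continuous g1 := continuous_id.prodMap hσvcont
  have hg2cont : Continuous g2 := hσcont.prodMap continuous_id
  set γ' : Measure ((Fin d → ℝ) × (Fin d → ℝ)) :=
    γ.restrict Bᶜ + (2⁻¹ : ℝ≥0∞) • Measure.map g1 β + (2⁻¹ : ℝ≥0∞) • Measure.map g2 β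
    with hγ'def
  -- auxiliary: fst/snd of scaled measures
  have hfst_smul : ∀ (r : ℝ≥0∞) (ρ : Measure ((Fin d → ℝ) × (Fin d → ℝ))),
      (r • ρ).fst = r • ρ.fst := by
    intro r ρ; rw [Measure.fst, Measure.fst, Measure.map_smul]
  have hsnd_smul : ∀ (r : ℝ≥0∞) (ρ : Measure ((Fin d → ℝ) × (Fin d → ℝ))),
      (r • ρ).snd = r • ρ.snd := by
    intro r ρ; rw [Measure.snd, Measure.snd, Measure.map_smul]
  -- marginal invariance of β
  have hβfst : Measure.map σ β.fst = β.fst := by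
    conv_rhs => rw [← hβT]
    rw [Measure.fst, Measure.fst, Measure.map_map measurable_fst hTmeas,
      Measure.map_map hσcont.measurable measurable_fst]
    rfl
  have hβsnd : Measure.map σv β.snd = β.snd := by
    conv_rhs => rw [← hβT]
    rw [Measure.snd, Measure.snd, Measure.map_map measurable_snd hTmeas,
      Measure.map_map hσvcont.measurable measurable_snd]
    rfl
  -- marginals of γ'
  have hhalf : ∀ ρ : Measure (Fin d → ℝ), (2⁻¹ : ℝ≥0∞) • ρ + (2⁻¹ : ℝ≥0∞) • ρ = ρ := by
    intro ρ
    rw [← add_smul, ENNReal.inv_two_add_inv_two, one_smul]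
  have hγ'fst : γ'.fst = μ := by
    rw [hγ'def, Measure.fst_add, Measure.fst_add, hfst_smul, hfst_smul]
    have h1 : (Measure.map g1 β).fst = β.fst := by
      rw [Measure.fst, Measure.fst, Measure.map_map measurable_fst hg1cont.measurable]
      rfl
    have h2 : (Measure.map g2 β).fst = Measure.map σ β.fst := by
      rw [Measure.fst, Measure.fst, Measure.map_map measurable_fst hg2cont.measurable,
        Measure.map_map hσcont.measurable measurable_fst]
      rfl
    rw [h1, h2, hβfst, add_assoc, hhalf, ← Measure.fst_add]
    have hre : γ.restrict Bᶜ + β = γ := by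
      rw [hβdef, add_comm]
      exact Measure.restrict_add_restrict_compl hBmeas
    rw [hre, hγ1]
  have hγ'snd : γ'.snd = ν := by
    rw [hγ'def, Measure.snd_add, Measure.snd_add, hsnd_smul, hsnd_smul]
    have h1 : (Measure.map g1 β).snd = Measure.map σv β.snd := by
      rw [Measure.snd, Measure.snd, Measure.map_map measurable_snd hg1cont.measurable,
        Measure.map_map hσvcont.measurable measurable_snd]
      rfl
    have h2 : (Measure.map g2 β).snd = β.snd := by
      rw [Measure.snd, Measure.snd, Measure.map_map measurable_snd hg2cont.measurable]
      rfl
    rw [h1, h2, hβsnd, add_assoc, hhalf, ← Measure.snd_add]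
    have hre : γ.restrict Bᶜ + β = γ := by
      rw [hβdef, add_comm]
      exact Measure.restrict_add_restrict_compl hBmeas
    rw [hre, hγ2]
  -- cost identities
  have hcg1 : ∀ q : (Fin d → ℝ) × (Fin d → ℝ), cf (g1 q) = cf q + F q := by
    intro q
    show c q.1 (σv q.2) = c q.1 q.2 + p q.1 αv * p α q.2
    rw [hc, hc, hpxσv]; ring
  have hcg2 : ∀ q : (Fin d → ℝ) × (Fin d → ℝ), cf (g2 q) = cf q + F q := by
    intro q
    show c (σ q.1) q.2 = c q.1 q.2 + p q.1 αv * p α q.2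
    rw [hc, hc, hpσxy]; ring
  -- integrability facts
  have hintβcf : Integrable cf β := hint cf hccont β hβle
  have hintβF : Integrable F β := hint F hFcont β hβle
  have hintγcf : Integrable cf γ := hint cf hccont γ le_rfl
  have hintmap1 : Integrable cf (Measure.map g1 β) := by
    rw [integrable_map_measure hccont.aestronglyMeasurable hg1cont.measurable.aemeasurable]
    exact hint (cf ∘ g1) (hccont.comp hg1cont) β hβle
  have hintmap2 : Integrable cf (Measure.map g2 β) := by
    rw [integrable_map_measure hccont.aestronglyMeasurable hg2cont.measurable.aemeasurable]
    exact hint (cf ∘ g2) (hccont.comp hg2cont) β hβle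
  -- compute ∫ cf dγ'
  have hIg1 : ∫ q, cf q ∂(Measure.map g1 β) = ∫ q, cf q ∂β + ∫ q, F q ∂β := by
    rw [integral_map hg1cont.measurable.aemeasurable hccont.aestronglyMeasurable]
    calc ∫ q, cf (g1 q) ∂β = ∫ q, (cf q + F q) ∂β := by
          congr 1; funext q; exact hcg1 q
      _ = ∫ q, cf q ∂β + ∫ q, F q ∂β := integral_add hintβcf hintβF
  have hIg2 : ∫ q, cf q ∂(Measure.map g2 β) = ∫ q, cf q ∂β + ∫ q, F q ∂β := by
    rw [integral_map hg2cont.measurable.aemeasurable hccont.aestronglyMeasurable]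
    calc ∫ q, cf (g2 q) ∂β = ∫ q, (cf q + F q) ∂β := by
          congr 1; funext q; exact hcg2 q
      _ = ∫ q, cf q ∂β + ∫ q, F q ∂β := integral_add hintβcf hintβF
  have hcost : ∫ q, cf q ∂γ' = ∫ q, cf q ∂γ + ∫ q, F q ∂β := by
    rw [hγ'def]
    rw [integral_add_measure (Integrable.add_measure
        ((hint cf hccont _ Measure.restrict_le_self))
        (hintmap1.smul_measure (by norm_num)))
        (hintmap2.smul_measure (by norm_num)),
      integral_add_measure (hint cf hccont _ Measure.restrict_le_self)
        (hintmap1.smul_measure (by norm_num)),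
      integral_smul_measure, integral_smul_measure, hIg1, hIg2]
    have htoReal : (2⁻¹ : ℝ≥0∞).toReal = (2⁻¹ : ℝ) := by
      simp
    rw [htoReal]
    have hsplit : ∫ q, cf q ∂(γ.restrict Bᶜ) + ∫ q, cf q ∂β = ∫ q, cf q ∂γ := by
      rw [hβdef, add_comm]
      exact integral_add_compl hBmeas hintγcf
    have : ∫ q, cf q ∂(γ.restrict Bᶜ) +
        (2⁻¹ : ℝ) • (∫ q, cf q ∂β + ∫ q, F q ∂β) +
        (2⁻¹ : ℝ) • (∫ q, cf q ∂β + ∫ q, F q ∂β) =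
        (∫ q, cf q ∂(γ.restrict Bᶜ) + ∫ q, cf q ∂β) + ∫ q, F q ∂β := by
      simp only [smul_eq_mul]; ring
    rw [this, hsplit]
  -- ∫ F dβ < 0
  have hγA : 0 < γ A := hsupp A hAo hzA
  have hβA : 0 < β A := by
    rw [hβdef, Measure.restrict_apply hAo.measurableSet,
      Set.inter_eq_self_of_subset_left Set.subset_union_left]
    exact hγA
  have hFneg : ∫ q, F q ∂β < 0 := by
    have hpos : 0 < ∫ q, (-F) q ∂β := by
      rw [integral_pos_iff_support_of_nonneg_ae ?_ hintβF.neg]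
      · refine lt_of_lt_of_le hβA (measure_mono ?_)
        intro q hq
        simp only [Function.mem_support, Pi.neg_apply, ne_eq, neg_eq_zero]
        exact ne_of_lt (hFB q (Or.inl hq))
      · rw [hβdef, Filter.EventuallyLE, ae_restrict_iff' hBmeas]
        filter_upwards with q hq
        simp only [Pi.zero_apply, Pi.neg_apply, Left.nonneg_neg_iff]
        exact le_of_lt (hFB q hq)
    simp only [Pi.neg_apply, integral_neg] at hpos
    linarith
  -- contradiction with optimality
  have hle := hopt γ' hγ'fst hγ'snd
  rw [hcost] at hle
  linarith
end

section
/- Let γ be a coupling of two measures whose support is c-cyclically monotone for the cost c(m,n) = -⟨m,n⟩, and suppose (m,n) and (σ(m), σ∨(n)) are both in the support of γ, where σ, σ∨ are dual reflections associated to (α, α∨) with ⟨α,α∨⟩ = 2. Then ⟨m, α∨⟩·⟨α, n⟩ ≥ 0. -/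
/-- If the support of a coupling is c-cyclically monotone for the cost
c(m,n) = -⟨m,n⟩, and both (m,n) and (σ(m),σ∨(n)) lie in the support, then
⟨m,α∨⟩·⟨α,n⟩ ≥ 0. -/
theorem stmt2 (V : Type*) [AddCommGroup V] [Module ℝ V] [FiniteDimensional ℝ V]
    (α : V) (αv : Module.Dual ℝ V) (hα : αv α = 2)
    (σ : V → V) (hσ : ∀ m, σ m = m - αv m • α)
    (σv : Module.Dual ℝ V → Module.Dual ℝ V) (hσv : ∀ n, σv n = n - n α • αv)
    (c : V → Module.Dual ℝ V → ℝ) (hc : ∀ m n, c m n = - n m)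
    (S : Set (V × Module.Dual ℝ V))
    (hmono : ∀ p ∈ S, ∀ q ∈ S, c p.1 p.2 + c q.1 q.2 ≤ c p.1 q.2 + c q.1 p.2)
    (m : V) (n : Module.Dual ℝ V)
    (hmn : (m, n) ∈ S) (hmn' : (σ m, σv n) ∈ S) :
    0 ≤ αv m * n α := by
  have h := hmono _ hmn _ hmn'
  simp only [hc, hσ, hσv, map_sub, map_smul, smul_eq_mul,
    LinearMap.sub_apply, LinearMap.smul_apply, hα] at h
  nlinarith [h]
end

section
/- Let σ and σ∨ be dual reflections on V and V* associated to (α, α∨) with ⟨α,α∨⟩ = 2, and let T: V → V* be an optimal transport map between measures μ on V and ν on V* (for cost c(m,n) = −⟨m,n⟩) which is equivariant: T(σ(m)) = σ∨(T(m)) μ-a.e. Then for μ-a.e. m, the point m and its image T(m) lie on the same side of the reflecting hyperplanes: ⟨m,α∨⟩·⟨α,T(m)⟩ ≥ 0. -/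
open MeasureTheory

/-- Identify ℝ^d with its dual via the standard pairing. If
T : V → V* is an optimal transport map between μ and ν for the cost
c(m,n) = −⟨m,n⟩ (i.e. the induced plan (id × T)_*μ is optimal) which is
equivariant μ-a.e. for dual reflections σ, σ∨, then for μ-a.e. m, the points m
and T(m) lie on the same side of the reflecting hyperplanes:
⟨m,α∨⟩·⟨α,T(m)⟩ ≥ 0. -/
theorem stmt15 (d : ℕ)
    (p : (Fin d → ℝ) → (Fin d → ℝ) → ℝ) (hp : ∀ m n, p m n = ∑ i, m i * n i)
    (α αv : Fin d → ℝ) (hα : p α αv = 2)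
    (σ σv : (Fin d → ℝ) → (Fin d → ℝ))
    (hσ : ∀ m, σ m = m - p m αv • α)
    (hσv : ∀ n, σv n = n - p α n • αv)
    (μ ν : Measure (Fin d → ℝ)) [IsFiniteMeasure μ] [IsFiniteMeasure ν]
    (hμc : ∃ K, IsCompact K ∧ μ Kᶜ = 0) (hνc : ∃ K, IsCompact K ∧ ν Kᶜ = 0)
    (hμinv : Measure.map σ μ = μ) (hνinv : Measure.map σv ν = ν)
    (c : (Fin d → ℝ) → (Fin d → ℝ) → ℝ) (hc : ∀ m n, c m n = - p m n)
    (T : (Fin d → ℝ) → (Fin d → ℝ)) (hT : Measurable T)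
    (hpush : Measure.map T μ = ν)
    (hopt : ∀ γ' : Measure ((Fin d → ℝ) × (Fin d → ℝ)),
      γ'.fst = μ → γ'.snd = ν →
      ∫ q, c q.1 q.2 ∂(Measure.map (fun m => (m, T m)) μ) ≤ ∫ q, c q.1 q.2 ∂γ')
    (hequiv : ∀ᵐ m ∂μ, T (σ m) = σv (T m)) :
    ∀ᵐ m ∂μ, 0 ≤ p m αv * p α (T m) := by
  classical
  -- pairing functions
  set a : (Fin d → ℝ) → ℝ := fun m => p m αv with ha
  set b : (Fin d → ℝ) → ℝ := fun n => p α n with hb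
  have hacont : Continuous a := by
    have : a = fun m => ∑ i, m i * αv i := by funext m; simp [ha, hp]
    rw [this]
    exact continuous_finset_sum _ fun i _ => (continuous_apply i).mul continuous_const
  have hbcont : Continuous b := by
    have : b = fun n => ∑ i, α i * n i := by funext n; simp [hb, hp]
    rw [this]
    exact continuous_finset_sum _ fun i _ => continuous_const.mul (continuous_apply i)
  have hσcont : Continuous σ := by
    have : σ = fun m => m - a m • α := by funext m; simp [hσ, ha]
    rw [this]
    exact continuous_id.sub (hacont.smul continuous_const)
  have hσvcont : Continuous σv := by
    have : σv = fun n => n - b n • αv := by funext n; simp [hσv, hb]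
    rw [this]
    exact continuous_id.sub (hbcont.smul continuous_const)
  -- algebraic identities
  have hplin : ∀ (m n : Fin d → ℝ) (t : ℝ) (x : Fin d → ℝ),
      p m (n - t • x) = p m n - t * p m x := by
    intro m n t x
    simp only [hp]
    simp only [Pi.sub_apply, Pi.smul_apply, smul_eq_mul]
    rw [Finset.mul_sum, ← Finset.sum_sub_distrib]
    exact Finset.sum_congr rfl fun i _ => by ring
  have hplin' : ∀ (m n : Fin d → ℝ) (t : ℝ) (x : Fin d → ℝ),
      p (m - t • x) n = p m n - t * p x n := by
    intro m n t x
    simp only [hp]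
    simp only [Pi.sub_apply, Pi.smul_apply, smul_eq_mul]
    rw [Finset.mul_sum, ← Finset.sum_sub_distrib]
    exact Finset.sum_congr rfl fun i _ => by ring
  have key1 : ∀ m, a (σ m) = - a m := by
    intro m
    simp only [ha, hσ]
    rw [hplin' m αv (p m αv) α, hα]; ring
  have key2 : ∀ n, b (σv n) = - b n := by
    intro n
    simp only [hb, hσv]
    rw [hplin α n (p α n) αv, hα]; ring
  have key3 : ∀ m n, p m (σv n) = p m n - b n * a m := by
    intro m n
    simp only [hb, ha, hσv]
    rw [hplin m n (p α n) αv]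
  have key5 : ∀ n, σv (σv n) = n := by
    intro n
    have h2 : p α (σv n) = - p α n := key2 n
    rw [hσv (σv n), h2, hσv n]
    simp [neg_smul, sub_neg_eq_add]
  -- the plan and its maps
  set emb : (Fin d → ℝ) → (Fin d → ℝ) × (Fin d → ℝ) := fun m => (m, T m) with hemb
  have hembm : Measurable emb := measurable_id.prodMk hT
  set γ : Measure ((Fin d → ℝ) × (Fin d → ℝ)) := Measure.map emb μ with hγ
  have : IsFiniteMeasure γ := by
    constructor
    rw [hγ, Measure.map_apply hembm MeasurableSet.univ]
    exact lt_of_le_of_lt (measure_mono (Set.subset_univ _)) (measure_lt_top μ _)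
  set Θ : (Fin d → ℝ) × (Fin d → ℝ) → (Fin d → ℝ) × (Fin d → ℝ) :=
    fun q => (σ q.1, σv q.2) with hΘ
  have hΘm : Measurable Θ :=
    (hσcont.measurable.comp measurable_fst).prodMk (hσvcont.measurable.comp measurable_snd)
  have hγinv : Measure.map Θ γ = γ := by
    rw [hγ, Measure.map_map hΘm hembm]
    have h1 : Θ ∘ emb = fun m => (σ m, σv (T m)) := rfl
    have h2 : (fun m => (σ m, σv (T m))) =ᵐ[μ] (emb ∘ σ) := by
      filter_upwards [hequiv] with m hm
      simp [hemb, Function.comp, hm]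
    rw [h1, Measure.map_congr h2, ← Measure.map_map hembm hσcont.measurable, hμinv]
  -- the bad set
  set B : Set ((Fin d → ℝ) × (Fin d → ℝ)) := {q | a q.1 * b q.2 < 0} with hB
  have hBmeas : MeasurableSet B :=
    measurableSet_lt (((hacont.comp continuous_fst).mul (hbcont.comp continuous_snd)).measurable)
      measurable_const
  set Ψ : (Fin d → ℝ) × (Fin d → ℝ) → (Fin d → ℝ) × (Fin d → ℝ) :=
    fun q => (q.1, if a q.1 * b q.2 < 0 then σv q.2 else q.2) with hΨ
  have hΨm : Measurable Ψ := by
    apply measurable_fst.prodMk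
    exact Measurable.ite hBmeas (hσvcont.measurable.comp measurable_snd) measurable_snd
  -- marginals of γ
  have hγfst : γ.fst = μ := by
    rw [hγ, Measure.fst, Measure.map_map measurable_fst hembm]
    have : (Prod.fst ∘ emb) = id := rfl
    rw [this, Measure.map_id]
  have hγsnd : γ.snd = ν := by
    rw [hγ, Measure.snd, Measure.map_map measurable_snd hembm]
    have : (Prod.snd ∘ emb) = T := rfl
    rw [this, hpush]
  -- marginals of the competitor
  have hfst' : (Measure.map Ψ γ).fst = μ := by
    rw [Measure.fst, Measure.map_map measurable_fst hΨm]
    have : (Prod.fst ∘ Ψ) = Prod.fst := rfl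
    rw [this, ← Measure.fst, hγfst]
  have hsnd' : (Measure.map Ψ γ).snd = ν := by
    rw [Measure.snd, Measure.map_map measurable_snd hΨm]
    have hψm : Measurable (Prod.snd ∘ Ψ) := measurable_snd.comp hΨm
    ext s hs
    rw [Measure.map_apply hψm hs]
    have hset : (Prod.snd ∘ Ψ) ⁻¹' s =
        (B ∩ {q | σv q.2 ∈ s}) ∪ (Bᶜ ∩ {q | q.2 ∈ s}) := by
      ext q
      by_cases hq : a q.1 * b q.2 < 0 <;>
        simp [hΨ, hB, Function.comp, hq]
    have hσvs : MeasurableSet {q : (Fin d → ℝ) × (Fin d → ℝ) | σv q.2 ∈ s} :=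
      (hσvcont.measurable.comp measurable_snd) hs
    have hs2 : MeasurableSet {q : (Fin d → ℝ) × (Fin d → ℝ) | q.2 ∈ s} :=
      measurable_snd hs
    have hdisj : Disjoint (B ∩ {q | σv q.2 ∈ s}) (Bᶜ ∩ {q | q.2 ∈ s}) :=
      Disjoint.mono Set.inter_subset_left Set.inter_subset_left disjoint_compl_right
    rw [hset, measure_union hdisj (hBmeas.compl.inter hs2)]
    -- swap on B using invariance
    have hswap : γ (B ∩ {q | σv q.2 ∈ s}) = γ (B ∩ {q | q.2 ∈ s}) := by
      conv_lhs => rw [← hγinv]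
      rw [Measure.map_apply hΘm (hBmeas.inter hσvs)]
      congr 1
      ext q
      simp only [Set.preimage_inter, Set.mem_inter_iff, Set.mem_preimage, Set.mem_setOf_eq,
        hΘ, hB]
      rw [key1, key2, key5]
      constructor
      · rintro ⟨h1, h2⟩
        refine ⟨?_, h2⟩
        rwa [neg_mul_neg] at h1
      · rintro ⟨h1, h2⟩
        refine ⟨?_, h2⟩
        rwa [neg_mul_neg]
    rw [hswap]
    have : γ (B ∩ {q | q.2 ∈ s}) + γ (Bᶜ ∩ {q | q.2 ∈ s}) = γ {q | q.2 ∈ s} := by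
      rw [Set.inter_comm B, Set.inter_comm Bᶜ, ← Set.diff_eq]
      exact measure_inter_add_diff _ hBmeas
    rw [this]
    have : γ {q | q.2 ∈ s} = γ.snd s := (Measure.snd_apply hs).symm
    rw [this, hγsnd]
  -- compact support of γ
  obtain ⟨K₁, hK₁c, hK₁0⟩ := hμc
  obtain ⟨K₂, hK₂c, hK₂0⟩ := hνc
  have hγK : γ ((K₁ ×ˢ K₂)ᶜ) = 0 := by
    have hsub : (K₁ ×ˢ K₂)ᶜ ⊆ (Prod.fst ⁻¹' K₁ᶜ) ∪ (Prod.snd ⁻¹' K₂ᶜ) := by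
      intro q hq
      simp only [Set.mem_compl_iff, Set.mem_prod, not_and_or] at hq
      rcases hq with h | h
      · exact Or.inl h
      · exact Or.inr h
    refine le_antisymm ?_ (zero_le)
    calc γ ((K₁ ×ˢ K₂)ᶜ) ≤ γ (Prod.fst ⁻¹' K₁ᶜ) + γ (Prod.snd ⁻¹' K₂ᶜ) :=
          le_trans (measure_mono hsub) (measure_union_le _ _)
      _ = μ K₁ᶜ + ν K₂ᶜ := by
          rw [← Measure.fst_apply hK₁c.isClosed.measurableSet.compl,
            ← Measure.snd_apply hK₂c.isClosed.measurableSet.compl, hγfst, hγsnd]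
      _ = 0 := by rw [hK₁0, hK₂0, add_zero]
  have hγae : ∀ᵐ q ∂γ, q ∈ K₁ ×ˢ K₂ := by
    rw [ae_iff]
    convert hγK using 2
    ext q; simp
  -- cost function as concrete function
  set F : (Fin d → ℝ) × (Fin d → ℝ) → ℝ := fun q => c q.1 q.2 with hF
  have hFeq : F = fun q => - p q.1 q.2 := by funext q; simp [hF, hc]
  have hpcont : Continuous (fun q : (Fin d → ℝ) × (Fin d → ℝ) => p q.1 q.2) := by
    have : (fun q : (Fin d → ℝ) × (Fin d → ℝ) => p q.1 q.2)
        = fun q => ∑ i, q.1 i * q.2 i := by funext q; simp [hp]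
    rw [this]
    exact continuous_finset_sum _ fun i _ =>
      ((continuous_apply i).comp continuous_fst).mul ((continuous_apply i).comp continuous_snd)
  have hFcont : Continuous F := by rw [hFeq]; exact hpcont.neg
  set f : (Fin d → ℝ) × (Fin d → ℝ) → ℝ := fun q => max (-(a q.1 * b q.2)) 0 with hf
  have hfcont : Continuous f :=
    (((hacont.comp continuous_fst).mul (hbcont.comp continuous_snd)).neg).max continuous_const
  have hfnonneg : ∀ q, 0 ≤ f q := fun q => le_max_right _ _
  -- pointwise identity  F (Ψ q) = F q - f q
  have hpt : ∀ q, F (Ψ q) = F q - f q := by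
    intro q
    by_cases hq : a q.1 * b q.2 < 0
    · have h1 : f q = -(a q.1 * b q.2) := max_eq_left (le_of_lt (by linarith))
      simp only [hΨ, if_pos hq, hFeq, h1]
      rw [key3 q.1 q.2]
      simp only [ha, hb]
      ring
    · have h1 : f q = 0 := max_eq_right (by push_neg at hq; linarith)
      simp only [hΨ, if_neg hq, h1, sub_zero]
  -- integrability
  have hbound : ∀ (g : (Fin d → ℝ) × (Fin d → ℝ) → ℝ), Continuous g → Integrable g γ := by
    intro g hg
    obtain ⟨C, hC⟩ := (hK₁c.prod hK₂c).exists_bound_of_continuousOn hg.continuousOn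
    refine Integrable.mono' (integrable_const C) hg.aestronglyMeasurable ?_
    filter_upwards [hγae] with q hq
    exact hC q hq
  have hFint : Integrable F γ := hbound F hFcont
  have hfint : Integrable f γ := hbound f hfcont
  have hFΨint : Integrable (fun q => F (Ψ q)) γ := by
    have : (fun q => F (Ψ q)) = fun q => F q - f q := funext hpt
    rw [this]
    exact hFint.sub hfint
  -- optimality
  have hineq := hopt (Measure.map Ψ γ) hfst' hsnd'
  have hmapint : ∫ q, c q.1 q.2 ∂(Measure.map Ψ γ) = ∫ q, F (Ψ q) ∂γ := by
    rw [show (fun q : (Fin d → ℝ) × (Fin d → ℝ) => c q.1 q.2) = F from rfl]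
    exact integral_map hΨm.aemeasurable hFcont.aestronglyMeasurable
  rw [hmapint] at hineq
  have hineq2 : ∫ q, F q ∂γ ≤ ∫ q, F q ∂γ - ∫ q, f q ∂γ := by
    calc ∫ q, F q ∂γ ≤ ∫ q, F (Ψ q) ∂γ := hineq
      _ = ∫ q, (F q - f q) ∂γ := by simp only [hpt]
      _ = ∫ q, F q ∂γ - ∫ q, f q ∂γ := integral_sub hFint hfint
  have hintf0 : ∫ q, f q ∂γ = 0 :=
    le_antisymm (by linarith) (integral_nonneg hfnonneg)
  have hfae : f =ᵐ[γ] 0 :=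
    (integral_eq_zero_iff_of_nonneg hfnonneg hfint).mp hintf0
  have hγgood : ∀ᵐ q ∂γ, 0 ≤ a q.1 * b q.2 := by
    filter_upwards [hfae] with q hq
    have hq0 : max (-(a q.1 * b q.2)) 0 = 0 := hq
    have h1 : -(a q.1 * b q.2) ≤ 0 := le_of_le_of_eq (le_max_left _ _) hq0
    linarith
  -- transfer back to μ
  have hsetmeas : MeasurableSet {q : (Fin d → ℝ) × (Fin d → ℝ) | 0 ≤ a q.1 * b q.2} :=
    measurableSet_le measurable_const
      (((hacont.comp continuous_fst).mul (hbcont.comp continuous_snd)).measurable)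
  have := (ae_map_iff hembm.aemeasurable hsetmeas).mp (by rwa [← hγ])
  filter_upwards [this] with m hm
  exact hm
end
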